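/- Let $\Delta$ be a root system with base $\Sigma$, let $I \subset \Sigma$, and let $\pi$ be the quotient projection modulo the span of $I$. Set $R = \pi(\Delta) \setminus \{0\}$. If $\Sigma'$ is any base of $\Delta$, then $\pi(\Sigma') \setminus \{0\}$ is a base of $R$ if and only if $\Sigma'$ contains a base of the subsystem $\Delta \cap \langle I \rangle$. -/

import Mathlib

variable {V : Type*} [AddCommGroup V] [Module ℝ V]

open Submodule Finsupp
open scoped Classical

section Helpers
variable {W : Type*} [AddCommGroup W] [Module ℝ W]

lemma mapDomain_apply_eq (f : V → W) (c : V →₀ ℤ) (x : W) :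
    Finsupp.mapDomain f c x = ∑ a ∈ c.support.filter (fun a => f a = x), c a := by
  classical
  rw [Finsupp.mapDomain, Finsupp.sum_apply, Finsupp.sum, Finset.sum_filter]
  refine Finset.sum_congr rfl fun a _ => ?_
  rw [Finsupp.single_apply]

lemma mapDomain_sign (f : V → W) (c : V →₀ ℤ)
    (h : (∀ v, 0 ≤ c v) ∨ (∀ v, c v ≤ 0)) :
    (∀ x, 0 ≤ Finsupp.mapDomain f c x) ∨ (∀ x, Finsupp.mapDomain f c x ≤ 0) := by
  classical
  rcases h with h | h
  · exact Or.inl fun x => by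
      rw [mapDomain_apply_eq]; exact Finset.sum_nonneg fun a _ => h a
  · exact Or.inr fun x => by
      rw [mapDomain_apply_eq]; exact Finset.sum_nonpos fun a _ => h a

lemma fiber_zero (f : V → W) (c : V →₀ ℤ)
    (h : (∀ v, 0 ≤ c v) ∨ (∀ v, c v ≤ 0))
    {x : W} (hx : Finsupp.mapDomain f c x = 0) {a : V} (ha : f a = x) : c a = 0 := by
  classical
  by_cases hs : a ∈ c.support
  · have hmem : a ∈ c.support.filter (fun a => f a = x) := Finset.mem_filter.2 ⟨hs, ha⟩
    rw [mapDomain_apply_eq] at hx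
    rcases h with h | h
    · exact le_antisymm (hx ▸ Finset.single_le_sum (fun i _ => h i) hmem) (h a)
    · have h2 : -c a ≤ ∑ i ∈ c.support.filter (fun a => f a = x), -c i :=
        Finset.single_le_sum (f := fun i => -c i) (fun i _ => neg_nonneg.2 (h i)) hmem
      rw [Finset.sum_neg_distrib, hx, neg_zero] at h2
      exact le_antisymm (h a) (by linarith)
  · exact Finsupp.notMem_support_iff.1 hs

lemma linindep_finsupp_zero {S : Set W} (hS : LinearIndependent ℝ ((↑) : S → W))
    (c : W →₀ ℤ) (hc : ↑c.support ⊆ S)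
    (h : c.sum (fun v n => (n : ℝ) • v) = 0) : c = 0 := by
  classical
  set l : W →₀ ℝ := c.mapRange (fun n : ℤ => (n : ℝ)) (by simp) with hl
  have hls : l ∈ Finsupp.supported ℝ ℝ S := by
    intro x hx
    exact hc (by simpa [hl, Finsupp.mapRange_apply, Finsupp.mem_support_iff] using hx)
  have hsum : Finsupp.linearCombination ℝ id l = 0 := by
    rw [Finsupp.linearCombination_apply, hl, Finsupp.sum_mapRange_index (by simp)]
    simpa using h
  have := linearIndepOn_iff.1 (linearIndependent_subtype_iff.1 hS) l hls hsum
  ext v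
  have : l v = 0 := by rw [this]; rfl
  exact_mod_cast by simpa [hl, Finsupp.mapRange_apply] using this

lemma filter_sign (p : V → Prop) [DecidablePred p] (c : V →₀ ℤ)
    (h : (∀ v, 0 ≤ c v) ∨ (∀ v, c v ≤ 0)) :
    (∀ v, 0 ≤ (c.filter p) v) ∨ (∀ v, (c.filter p) v ≤ 0) := by
  rcases h with h | h
  · left; intro v; rw [Finsupp.filter_apply]; split; exacts [h v, le_rfl]
  · right; intro v; rw [Finsupp.filter_apply]; split; exacts [h v, le_rfl]

lemma key_sum (K : Submodule ℝ V) [DecidablePred fun v : V => v ∉ (K : Set V)] (c : V →₀ ℤ) :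
    (Finsupp.mapDomain K.mkQ (c.filter (fun v => v ∉ (K : Set V)))).sum
        (fun v n => (n : ℝ) • v) = K.mkQ (c.sum fun v n => (n : ℝ) • v) := by
  classical
  rw [Finsupp.sum_mapDomain_index (by simp) (by intros; push_cast; rw [add_smul])]
  rw [map_finsuppSum]
  simp only [map_smul]
  rw [← Finsupp.sum_filter_add_sum_filter_not (fun v => v ∉ (K : Set V)) c
    (fun a n => (n : ℝ) • K.mkQ a)]
  have : (Finsupp.filter (fun a => ¬ a ∉ (K : Set V)) c).sum
      (fun a n => (n : ℝ) • K.mkQ a) = 0 := by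
    rw [Finsupp.sum]
    refine Finset.sum_eq_zero fun a ha => ?_
    rw [Finsupp.support_filter, Finset.mem_filter, not_not] at ha
    have haK : a ∈ K := ha.2
    have : K.mkQ a = 0 := by
      rw [Submodule.mkQ_apply, Submodule.Quotient.mk_eq_zero]; exact haK
    rw [this, smul_zero]
  rw [this, add_zero]

end Helpers


def IsRootSystem (Δ : Set V) : Prop :=
  Δ.Finite ∧ (0 : V) ∉ Δ ∧ (∀ α ∈ Δ, -α ∈ Δ) ∧
    ∀ α ∈ Δ, ∃ f : V →ₗ[ℝ] ℝ, f α = 2 ∧ (∀ β ∈ Δ, ∃ n : ℤ, f β = (n : ℝ)) ∧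
      ∀ β ∈ Δ, β - f β • α ∈ Δ

def IsBase {W : Type*} [AddCommGroup W] [Module ℝ W] (Δ S : Set W) : Prop :=
  S ⊆ Δ ∧ LinearIndependent ℝ ((↑) : S → W) ∧
    ∀ β ∈ Δ, ∃ c : W →₀ ℤ, ↑c.support ⊆ S ∧
      β = c.sum (fun v n => (n : ℝ) • v) ∧ ((∀ v, 0 ≤ c v) ∨ (∀ v, c v ≤ 0))

/-- let `Δ` be a root system with base `Sg₀`, `I ⊆ Sg₀`, `π` the quotient map
modulo `span I`, and `R = π(Δ) \ {0}`. For any base `Sg` of `Δ`, `π(Sg) \ {0}` is a base of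
`R` iff `Sg` contains a base of `Δ ∩ ⟨I⟩`. -/
theorem stmt3 (Δ Sg₀ I Sg : Set V) (hΔ : IsRootSystem Δ)
    (h₀ : IsBase Δ Sg₀) (hI : I ⊆ Sg₀) (hSg : IsBase Δ Sg) :
    IsBase (((Submodule.span ℝ I).mkQ '' Δ) \ {0})
        (((Submodule.span ℝ I).mkQ '' Sg) \ {0}) ↔
      ∃ B ⊆ Sg, IsBase (Δ ∩ (Submodule.span ℝ I : Set V)) B := by
  classical
  set K := Submodule.span ℝ I with hK
  set π := K.mkQ with hπ
  have hπker : ∀ v : V, π v = 0 ↔ v ∈ K := fun v => by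
    rw [hπ, Submodule.mkQ_apply, Submodule.Quotient.mk_eq_zero]
  constructor
  · rintro ⟨hsub, hli, hrep⟩
    refine ⟨Sg ∩ K, Set.inter_subset_left, fun x hx => ⟨hSg.1 hx.1, hx.2⟩,
      LinearIndepOn.mono (v := id) hSg.2.1 Set.inter_subset_left, ?_⟩
    rintro β ⟨hβΔ, hβK⟩
    obtain ⟨c, hcsupp, hcsum, hcsign⟩ := hSg.2.2 β hβΔ
    set c₀ := c.filter (fun v => v ∉ (K : Set V)) with hc₀
    have hsign₀ : (∀ v, 0 ≤ c₀ v) ∨ (∀ v, c₀ v ≤ 0) :=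
      by rw [hc₀]; exact filter_sign _ c hcsign
    set d := Finsupp.mapDomain π c₀ with hd
    have hdsum : d.sum (fun v n => (n : ℝ) • v) = 0 := by
      rw [hd, hc₀, key_sum, ← hcsum]
      exact (hπker β).2 hβK
    have hdsupp : ↑d.support ⊆ (π '' Sg) \ {0} := by
      intro x hx
      obtain ⟨a, ha, rfl⟩ := Finset.mem_image.1 (Finsupp.mapDomain_support hx)
      have ha' : a ∈ c.support ∧ a ∉ (K : Set V) := by
        rw [hc₀, Finsupp.support_filter, Finset.mem_filter] at ha
        exact ha
      exact ⟨⟨a, hcsupp ha'.1, rfl⟩, fun h0 => ha'.2 ((hπker a).1 h0)⟩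
    have hd0 : d = 0 := linindep_finsupp_zero hli d hdsupp hdsum
    have hc₀0 : ∀ a, c₀ a = 0 := fun a => by
      by_cases haK : a ∈ (K : Set V)
      · rw [hc₀, Finsupp.filter_apply]; simp [haK]
      · exact fiber_zero π c₀ hsign₀ (x := π a) (by rw [← hd, hd0]; rfl) rfl
    refine ⟨c, ?_, hcsum, hcsign⟩
    intro a ha
    refine ⟨hcsupp ha, ?_⟩
    by_contra haK
    have : c₀ a = c a := by rw [hc₀, Finsupp.filter_apply]; simp [haK]
    exact Finsupp.mem_support_iff.1 ha (by rw [← this, hc₀0])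
  · rintro ⟨B, hBSg, hBsub, hBli, hBrep⟩
    have hBK : B ⊆ (K : Set V) := fun x hx => (hBsub hx).2
    have hKspanB : K ≤ Submodule.span ℝ B := by
      rw [hK, Submodule.span_le]
      intro ι hι
      obtain ⟨c, hcs, hcsum, -⟩ := hBrep ι ⟨h₀.1 (hI hι), Submodule.subset_span hι⟩
      rw [hcsum]
      exact Submodule.sum_mem _ fun a ha =>
        Submodule.smul_mem _ _ (Submodule.subset_span (hcs ha))
    have hmemB : ∀ s ∈ Sg, (π s = 0 ↔ s ∈ B) := by
      intro s hs
      constructor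
      · intro h0
        by_contra hsB
        have h1 : s ∈ Submodule.span ℝ B := hKspanB ((hπker s).1 h0)
        have h2 := LinearIndependent.notMem_span_image hSg.2.1 (s := {j : ↥Sg | (j : V) ∈ B})
          (x := ⟨s, hs⟩) hsB
        have himg : ((↑) : Sg → V) '' {j : ↥Sg | (j : V) ∈ B} = B := by
          ext y
          constructor
          · rintro ⟨j, hj, rfl⟩; exact hj
          · intro hy; exact ⟨⟨y, hBSg hy⟩, hy, rfl⟩
        rw [himg] at h2
        exact h2 h1
      · intro hsB; exact (hπker s).2 (hBK hsB)
    have hset : (π '' Sg) \ {0} = π '' (Sg \ B) := by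
      ext x
      constructor
      · rintro ⟨⟨s, hs, rfl⟩, h0⟩
        exact ⟨s, ⟨hs, fun hB => (h0 : π s ≠ 0) ((hmemB s hs).2 hB)⟩, rfl⟩
      · rintro ⟨s, ⟨hs, hsB⟩, rfl⟩
        exact ⟨⟨s, hs, rfl⟩, fun h0 => hsB ((hmemB s hs).1 h0)⟩
    refine ⟨?_, ?_, ?_⟩
    · rintro x ⟨⟨s, hs, rfl⟩, h0⟩
      exact ⟨⟨s, hSg.1 hs, rfl⟩, h0⟩
    · rw [hset]
      have hdisj : Disjoint (Submodule.span ℝ (Sg \ B)) (LinearMap.ker π) := by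
        rw [hπ, Submodule.ker_mkQ]
        have h1 : Disjoint {j : ↥Sg | (j : V) ∉ B} {j : ↥Sg | (j : V) ∈ B} := by
          rw [Set.disjoint_left]; intro a h1 h2; exact h1 h2
        have h2 := LinearIndependent.disjoint_span_image hSg.2.1 h1
        have e1 : ((↑) : Sg → V) '' {j : ↥Sg | (j : V) ∉ B} = Sg \ B := by
          ext y
          constructor
          · rintro ⟨j, hj, rfl⟩; exact ⟨j.2, hj⟩
          · rintro ⟨hy, hyB⟩; exact ⟨⟨y, hy⟩, hyB, rfl⟩
        have e2 : ((↑) : Sg → V) '' {j : ↥Sg | (j : V) ∈ B} = B := by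
          ext y
          constructor
          · rintro ⟨j, hj, rfl⟩; exact hj
          · intro hy; exact ⟨⟨y, hBSg hy⟩, hy, rfl⟩
        rw [e1, e2] at h2
        exact h2.mono_right hKspanB
      have hli2 : LinearIndependent ℝ (fun x : ↥(Sg \ B) => π (x : V)) := by
        have := LinearIndependent.map (v := ((↑) : ↥(Sg \ B) → V)) (LinearIndepOn.mono (v := id) hSg.2.1
            Set.diff_subset) (f := π)
          (by rwa [Subtype.range_coe])
        exact this
      exact LinearIndepOn.id_image (v := ⇑π) hli2
    · rintro x ⟨⟨β, hβΔ, rfl⟩, h0⟩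
      obtain ⟨c, hcsupp, hcsum, hcsign⟩ := hSg.2.2 β hβΔ
      set c₀ := c.filter (fun v => v ∉ (K : Set V)) with hc₀
      have hsign₀ : (∀ v, 0 ≤ c₀ v) ∨ (∀ v, c₀ v ≤ 0) :=
        by rw [hc₀]; exact filter_sign _ c hcsign
      set d := Finsupp.mapDomain π c₀ with hd
      have hdsum : d.sum (fun v n => (n : ℝ) • v) = π β := by
        rw [hd, hc₀, key_sum, ← hcsum]
      have hdsupp : ↑d.support ⊆ (π '' Sg) \ {0} := by
        intro x hx
        obtain ⟨a, ha, rfl⟩ := Finset.mem_image.1 (Finsupp.mapDomain_support hx)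
        have ha' : a ∈ c.support ∧ a ∉ (K : Set V) := by
          rw [hc₀, Finsupp.support_filter, Finset.mem_filter] at ha
          exact ha
        exact ⟨⟨a, hcsupp ha'.1, rfl⟩, fun h0 => ha'.2 ((hπker a).1 h0)⟩
      exact ⟨d, hdsupp, hdsum.symm, mapDomain_sign π c₀ hsign₀⟩
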